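/- Let γ > 0 and ε > 0, and let φ be a comparison function for which there exist positive reals b_n such that φ^[n+1](r) ≤ ((n−1)/n)^{ε+1+γ} · φ^[n](r) + b_n for every n ≥ 1 and every r ≥ 0. If the series Σ_{n≥0} b_n · n^{ε+1+γ} converges, then Σ_{n≥1} n^γ · φ^[n](r) converges for every r ≥ 0. -/

import Mathlib

theorem summable_of_variable_coefficient_bound
    (γ ε : ℝ) (hγ : 0 < γ) (hε : 0 < ε)
    (φ : ℝ → ℝ)
    (hφ_nonneg : ∀ r, 0 ≤ r → 0 ≤ φ r)
    (hφ_mono : ∀ x y, 0 ≤ x → x ≤ y → φ x ≤ φ y)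
    (hφ_iter : ∀ r, 0 ≤ r → Filter.Tendsto (fun n => φ^[n] r) Filter.atTop (nhds 0))
    (b : ℕ → ℝ) (hb : ∀ n, 0 < b n)
    (hrec : ∀ n : ℕ, 1 ≤ n → ∀ r : ℝ, 0 ≤ r →
      φ^[n + 1] r ≤ (((n : ℝ) - 1) / n) ^ (ε + 1 + γ) * φ^[n] r + b n)
    (hsum : Summable (fun n : ℕ => b n * (n : ℝ) ^ (ε + 1 + γ))) :
    ∀ r : ℝ, 0 ≤ r → Summable (fun n : ℕ => (n : ℝ) ^ γ * φ^[n] r) := by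
  intro r hr
  set p : ℝ := ε + 1 + γ with hp_def
  have hp : 0 < p := by positivity
  set a : ℕ → ℝ := fun n => φ^[n] r with ha_def
  have ha_nonneg : ∀ n, 0 ≤ a n := by
    intro n
    induction n with
    | zero => simpa [ha_def]
    | succ n ih =>
      have : a (n + 1) = φ (a n) := by
        simp [ha_def, Function.iterate_succ_apply']
      rw [this]
      exact hφ_nonneg _ ih
  have hbterm_nonneg : ∀ k : ℕ, 0 ≤ b k * (k : ℝ) ^ p := fun k =>
    mul_nonneg (hb k).le (Real.rpow_nonneg (Nat.cast_nonneg k) p)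
  set S : ℝ := ∑' k : ℕ, b k * (k : ℝ) ^ p with hS_def
  -- key induction
  have key : ∀ n : ℕ, 1 ≤ n →
      ((n : ℝ) - 1) ^ p * a n ≤ ∑ k ∈ Finset.Ico 1 n, b k * (k : ℝ) ^ p := by
    intro n hn
    induction n, hn using Nat.le_induction with
    | base =>
      simp [Real.zero_rpow hp.ne']
    | succ n hn ih =>
      have hn1 : (1 : ℝ) ≤ (n : ℝ) := by exact_mod_cast hn
      have hnpos : (0 : ℝ) < (n : ℝ) := by linarith
      have hnp_pos : (0 : ℝ) < (n : ℝ) ^ p := Real.rpow_pos_of_pos hnpos p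
      have hrec' := hrec n hn r hr
      have hdiv : (((n : ℝ) - 1) / n) ^ p = ((n : ℝ) - 1) ^ p / (n : ℝ) ^ p :=
        Real.div_rpow (by linarith) (le_of_lt hnpos) p
      have hmul : (n : ℝ) ^ p * a (n + 1) ≤
          ((n : ℝ) - 1) ^ p * a n + b n * (n : ℝ) ^ p := by
        have h1 : (n : ℝ) ^ p * a (n + 1) ≤
            (n : ℝ) ^ p * ((((n : ℝ) - 1) / n) ^ p * a n + b n) := by
          apply mul_le_mul_of_nonneg_left _ hnp_pos.le
          exact hrec'
        calc (n : ℝ) ^ p * a (n + 1)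
            ≤ (n : ℝ) ^ p * ((((n : ℝ) - 1) / n) ^ p * a n + b n) := h1
          _ = ((n : ℝ) - 1) ^ p * a n + b n * (n : ℝ) ^ p := by
              rw [hdiv]; field_simp
      have hcast : ((n + 1 : ℕ) : ℝ) - 1 = (n : ℝ) := by push_cast; ring
      rw [hcast, Finset.sum_Ico_succ_top hn]
      calc (n : ℝ) ^ p * a (n + 1)
          ≤ ((n : ℝ) - 1) ^ p * a n + b n * (n : ℝ) ^ p := hmul
        _ ≤ (∑ k ∈ Finset.Ico 1 n, b k * (k : ℝ) ^ p) + b n * (n : ℝ) ^ p := by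
            linarith [ih]
  have hsum_le_S : ∀ n : ℕ, (∑ k ∈ Finset.Ico 1 n, b k * (k : ℝ) ^ p) ≤ S :=
    fun n => Summable.sum_le_tsum _ (fun k _ => hbterm_nonneg k) hsum
  have key2 : ∀ n : ℕ, 1 ≤ n → ((n : ℝ) - 1) ^ p * a n ≤ S :=
    fun n hn => (key n hn).trans (hsum_le_S n)
  have hS_nonneg : 0 ≤ S := tsum_nonneg hbterm_nonneg
  -- summable majorant
  have hg : Summable (fun n : ℕ => 2 ^ γ * S * ((n : ℝ) + 1) ^ (-(1 + ε))) := by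
    have h1 : Summable (fun n : ℕ => ((n : ℝ)) ^ (-(1 + ε))) :=
      (Real.summable_nat_rpow (p := -(1 + ε))).mpr (by linarith)
    have h2 : Summable (fun n : ℕ => (((n + 1 : ℕ) : ℝ)) ^ (-(1 + ε))) :=
      (summable_nat_add_iff 1).mpr h1
    have h3 : Summable (fun n : ℕ => ((n : ℝ) + 1) ^ (-(1 + ε))) := by
      convert h2 using 2 with n; push_cast; ring
    exact h3.mul_left _
  -- shifted comparison
  have hshift : Summable (fun n : ℕ => ((n + 2 : ℕ) : ℝ) ^ γ * a (n + 2)) := by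
    apply Summable.of_nonneg_of_le _ _ hg
    · intro n
      exact mul_nonneg (Real.rpow_nonneg (Nat.cast_nonneg _) γ) (ha_nonneg _)
    · intro n
      have hx : (0 : ℝ) < (n : ℝ) + 1 := by positivity
      have hkey := key2 (n + 2) (by omega)
      have hcast : ((n + 2 : ℕ) : ℝ) - 1 = (n : ℝ) + 1 := by push_cast; ring
      rw [hcast] at hkey
      -- (n+2)^γ ≤ 2^γ * (n+1)^γ
      have h1 : ((n + 2 : ℕ) : ℝ) ^ γ ≤ (2 * ((n : ℝ) + 1)) ^ γ := by
        apply Real.rpow_le_rpow (by positivity) _ hγ.le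
        push_cast; linarith
      have h2 : (2 * ((n : ℝ) + 1)) ^ γ = 2 ^ γ * ((n : ℝ) + 1) ^ γ :=
        Real.mul_rpow (by norm_num) hx.le
      have h3 : ((n : ℝ) + 1) ^ γ = ((n : ℝ) + 1) ^ (-(1 + ε)) * ((n : ℝ) + 1) ^ p := by
        rw [← Real.rpow_add hx, hp_def]; ring_nf
      calc ((n + 2 : ℕ) : ℝ) ^ γ * a (n + 2)
          ≤ 2 ^ γ * ((n : ℝ) + 1) ^ γ * a (n + 2) := by
            apply mul_le_mul_of_nonneg_right _ (ha_nonneg _)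
            rw [← h2]; exact h1
        _ = 2 ^ γ * (((n : ℝ) + 1) ^ (-(1 + ε)) * (((n : ℝ) + 1) ^ p * a (n + 2))) := by
            rw [h3]; ring
        _ ≤ 2 ^ γ * (((n : ℝ) + 1) ^ (-(1 + ε)) * S) := by
            apply mul_le_mul_of_nonneg_left _ (by positivity)
            apply mul_le_mul_of_nonneg_left hkey (Real.rpow_nonneg hx.le _)
        _ = 2 ^ γ * S * ((n : ℝ) + 1) ^ (-(1 + ε)) := by ring
  exact (summable_nat_add_iff 2).mp hshift
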